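/- Let a, λ ∈ ℂ with a ≠ 0, |λ| = 1, and λ^n ∉ ℝ for all integers n > 0. Then there exists δ > 0 such that |a·λ^n + conj(a·λ^n)| > δ for infinitely many n ∈ ℕ; consequently, the series Σ_{n=0}^∞ |a·λ^n + conj(a·λ^n)| diverges. -/

import Mathlib

/-- Let `a, λ ∈ ℂ` with `a ≠ 0`, `|λ| = 1` and `λ^n ∉ ℝ` for all `n > 0`.
Then there is `δ > 0` with `|a·λ^n + conj(a·λ^n)| > δ` for infinitely many `n`;
consequently the series `Σ_n |a·λ^n + conj(a·λ^n)|` diverges. -/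
theorem stmt_13 (a lam : ℂ) (ha : a ≠ 0) (hlam : ‖lam‖ = 1)
    (hreal : ∀ n : ℕ, 0 < n → lam ^ n ∉ Set.range ((↑) : ℝ → ℂ)) :
    (∃ δ : ℝ, 0 < δ ∧ ∀ N : ℕ, ∃ n : ℕ, N ≤ n ∧
      ‖a * lam ^ n + starRingEnd ℂ (a * lam ^ n)‖ > δ) ∧
    ¬ Summable (fun n : ℕ => ‖a * lam ^ n + starRingEnd ℂ (a * lam ^ n)‖) := by
  have him : lam.im ≠ 0 := by
    intro h
    refine hreal 1 one_pos ?_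
    rw [pow_one]
    exact ⟨lam.re, Complex.ext (by simp) (by simp [h])⟩
  have hm : 0 < |lam.im| := abs_pos.mpr him
  have ha' : 0 < ‖a‖ := norm_pos_iff.mpr ha
  set δ : ℝ := ‖a‖ * |lam.im| / 3 with hδdef
  have hδ : 0 < δ := by positivity
  -- rewrite the terms as 2|Re z|
  have hterm : ∀ n : ℕ, ‖a * lam ^ n + starRingEnd ℂ (a * lam ^ n)‖
      = |2 * (a * lam ^ n).re| := by
    intro n
    rw [Complex.add_conj, Complex.norm_real, Real.norm_eq_abs]
  have habs : ∀ n : ℕ, ‖a * lam ^ n‖ = ‖a‖ := by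
    intro n
    rw [norm_mul, norm_pow, hlam, one_pow, mul_one]
  have hre1 : |lam.re| ≤ 1 := hlam ▸ Complex.abs_re_le_norm lam
  have him1 : |lam.im| ≤ 1 := hlam ▸ Complex.abs_im_le_norm lam
  have key : ∀ N : ℕ, ∃ n : ℕ, N ≤ n ∧
      ‖a * lam ^ n + starRingEnd ℂ (a * lam ^ n)‖ > δ := by
    intro N
    by_contra hcon
    push_neg at hcon
    have hx := hcon N le_rfl
    have hy := hcon (N + 1) (Nat.le_succ N)
    rw [hterm] at hx hy
    set z : ℂ := a * lam ^ N with hz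
    have hrec : a * lam ^ (N + 1) = lam * z := by rw [hz]; ring
    rw [hrec] at hy
    have hmulre : (lam * z).re = lam.re * z.re - lam.im * z.im := Complex.mul_re lam z
    -- bound |z.im|
    have him2 : |lam.im * z.im| = |lam.re * z.re - (lam * z).re| := by
      rw [hmulre, sub_sub_cancel]
    have h1 : |lam.im| * |z.im| ≤ δ := by
      rw [← abs_mul, him2]
      have : |lam.re * z.re - (lam * z).re| ≤ |lam.re| * |z.re| + |(lam * z).re| := by
        calc |lam.re * z.re - (lam * z).re| ≤ |lam.re * z.re| + |(lam * z).re| := abs_sub _ _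
          _ = |lam.re| * |z.re| + |(lam * z).re| := by rw [abs_mul]
      have hxre : |z.re| ≤ δ / 2 := by
        have := hx
        rw [abs_mul] at this
        simp only [abs_two] at this
        linarith
      have hyre : |(lam * z).re| ≤ δ / 2 := by
        have := hy
        rw [abs_mul] at this
        simp only [abs_two] at this
        linarith
      nlinarith [abs_nonneg lam.re, abs_nonneg z.re]
    -- |a| ≤ |z.re| + |z.im|
    have h2 : ‖a‖ ≤ |z.re| + |z.im| := by
      have h := Complex.norm_le_abs_re_add_abs_im z
      rwa [show ‖z‖ = ‖a‖ from habs N] at h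
    have hxre : |z.re| ≤ δ / 2 := by
      rw [abs_mul] at hx
      simp only [abs_two] at hx
      linarith
    have him3 : |z.im| * |lam.im| ≤ δ := by linarith [h1, mul_comm |lam.im| |z.im|]
    -- derive contradiction
    have hane : ‖a‖ * |lam.im| ≤ δ / 2 * |lam.im| + δ := by
      nlinarith [abs_nonneg z.im]
    rw [hδdef] at hane
    nlinarith
  refine ⟨⟨δ, hδ, key⟩, ?_⟩
  intro hsum
  have htend := hsum.tendsto_atTop_zero
  rw [Metric.tendsto_atTop] at htend
  obtain ⟨N, hN⟩ := htend δ hδ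
  obtain ⟨n, hn, hgt⟩ := key N
  have := hN n hn
  rw [Real.dist_eq, sub_zero] at this
  have hnn : 0 ≤ ‖a * lam ^ n + starRingEnd ℂ (a * lam ^ n)‖ :=
    norm_nonneg _
  rw [abs_of_nonneg hnn] at this
  linarith
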